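/- Let H be a marked, primitive and aperiodic substitution over a finite alphabet A, and let K be the closure of the σ-orbit of a fixed point of H. If x ∈ A^ℕ \ K, then H^s(x) ∉ K for every integer s ≥ 0; equivalently, δ(H^s(x)) is finite for every s. -/

import Mathlib

open Filter Topology MeasureTheory

variable {A : Type*}

/-- The shift map on infinite words. -/
def shift (x : ℕ → A) : ℕ → A := fun n => x (n + 1)

/-- Image of a finite word under a substitution. -/
def wordMap (H : A → List A) (w : List A) : List A := w.flatMap H

/-- Image of an infinite word under a substitution (each `H a` nonempty makes this the
infinite concatenation `H(x₀)H(x₁)⋯`). -/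
def substSeq (H : A → List A) (x : ℕ → A) : ℕ → A :=
  fun n => (wordMap H ((List.range (n + 1)).map x)).getD n (x 0)

/-- The prefix of length `n` of an infinite word. -/
def prefixWord (x : ℕ → A) (n : ℕ) : List A := (List.range n).map x

/-- The factor of length `n` at position `i` of an infinite word. -/
def factorAt (x : ℕ → A) (i n : ℕ) : List A := (List.range n).map fun j => x (i + j)

/-- The language of an infinite word: the set of its finite factors. -/
def Lang (u : ℕ → A) : Set (List A) := {w | ∃ i, w = factorAt u i w.length}

/-- A sequence is (purely) periodic for the shift. -/
def PeriodicSeq (x : ℕ → A) : Prop := ∃ m, 0 < m ∧ ∀ n, x (n + m) = x n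

/-- `u` is a fixed point of the substitution `H`. -/
def IsFixedPointSubst (H : A → List A) (u : ℕ → A) : Prop := substSeq H u = u

/-- `H` is primitive: some power of `H` maps every letter onto a word containing
every letter. -/
def PrimitiveSubst (H : A → List A) : Prop :=
  ∃ k, 0 < k ∧ ∀ a b : A, b ∈ (wordMap H)^[k] [a]

/-- `H` is aperiodic: no fixed point of `H` is periodic for the shift. -/
def AperiodicSubst (H : A → List A) : Prop :=
  ∀ u : ℕ → A, IsFixedPointSubst H u → ¬ PeriodicSeq u

/-- `H` is marked: first letters of images are pairwise distinct, and so are last letters. -/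
def MarkedSubst (H : A → List A) (hne : ∀ a, H a ≠ []) : Prop :=
  Function.Injective (fun a => (H a).head (hne a)) ∧
  Function.Injective (fun a => (H a).getLast (hne a))

/-- `H` is 2-full (with respect to the fixed point `u`): every word of length 2 belongs
to the language. -/
def TwoFull (H : A → List A) (u : ℕ → A) : Prop :=
  ∀ w : List A, w.length = 2 → w ∈ Lang u

/-- The attractor `K`: closure of the shift-orbit of the fixed point `u`. -/
def orbitClosure [TopologicalSpace A] (u : ℕ → A) : Set (ℕ → A) :=
  closure {y | ∃ n, y = shift^[n] u}

/-- `δ(x)`: the length of the maximal prefix of `x` belonging to the language of `u`. -/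
noncomputable def delta (u x : ℕ → A) : ℕ := sSup {n | prefixWord x n ∈ Lang u}

/-- The renormalization operator `R`. -/
noncomputable def renorm (H : A → List A) (V : (ℕ → A) → ℝ) : (ℕ → A) → ℝ :=
  fun x => ∑ i ∈ Finset.range (H (x 0)).length, V (shift^[i] (substSeq H x))

/-- `t_n(x) = |H^n(x₀)|`. -/
def tlen (H : A → List A) (n : ℕ) (x : ℕ → A) : ℕ := ((wordMap H)^[n] [x 0]).length

/-- An accident occurs at time `b`. -/
def AccidentAt (u x : ℕ → A) (b : ℕ) : Prop :=
  0 < b ∧ delta u x - b < delta u (shift^[b] x) ∧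
    ∀ i < b, delta u (shift^[i] x) = delta u x - i

/-- The first accident time of `x` (junk value `0` if there is none). -/
noncomputable def firstAccident (u x : ℕ → A) : ℕ := sInf {b | AccidentAt u x b}

/-- The `j`-th accident time `B_j` of `x`, defined inductively. -/
noncomputable def accidentTime (u x : ℕ → A) : ℕ → ℕ
  | 0 => 0
  | j + 1 => accidentTime u x j + firstAccident u (shift^[accidentTime u x j] x)

/-- The set of (genuine) accident times of `x`. -/
def AccidentSet (u x : ℕ → A) : Set ℕ :=
  {B | ∃ j : ℕ, B = accidentTime u x (j + 1) ∧
        AccidentAt u (shift^[accidentTime u x j] x)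
          (firstAccident u (shift^[accidentTime u x j] x))}

/-- A word is right special. -/
def RightSpecial (u : ℕ → A) (w : List A) : Prop :=
  ∃ b c : A, b ≠ c ∧ w ++ [b] ∈ Lang u ∧ w ++ [c] ∈ Lang u

/-- A word is left special. -/
def LeftSpecial (u : ℕ → A) (w : List A) : Prop :=
  ∃ a b : A, a ≠ b ∧ a :: w ∈ Lang u ∧ b :: w ∈ Lang u

/-- A word is bispecial. -/
def Bispecial (u : ℕ → A) (w : List A) : Prop := RightSpecial u w ∧ LeftSpecial u w

/-- `l` is a recognizability constant for `H`: every long enough word of the language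
admits a unique desubstitution. -/
def RecogBound (H : A → List A) (u : ℕ → A) (l : ℕ) : Prop :=
  ∀ z ∈ Lang u, l < z.length →
    ∃! d : List A × List A × List A,
      ∃ s p : A,
        z = d.1 ++ wordMap H d.2.1 ++ d.2.2 ∧
        d.2.1 ∈ Lang u ∧
        d.1 <:+ H s ∧ d.1.length < (H s).length ∧
        d.2.2 <+: H p ∧ d.2.2.length < (H p).length ∧
        ([s] ++ d.2.1 ++ [p]) ∈ Lang u

/-- The incidence matrix of a substitution, with real entries. -/
def incMat [Fintype A] [DecidableEq A] (H : A → List A) : Matrix A A ℝ :=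
  fun a b => ((H a).count b : ℝ)

/-- `lam` is the Perron–Frobenius eigenvalue of the incidence matrix of the (primitive)
substitution `H`: it admits an entrywise positive eigenvector. -/
def IsPerronValue [Fintype A] [DecidableEq A] (H : A → List A) (lam : ℝ) : Prop :=
  ∃ v : A → ℝ, (∀ a, 0 < v a) ∧ (incMat H).mulVec v = lam • v

/-- Concatenation of a finite word with an infinite word. -/
def catWord (S : List A) (y : ℕ → A) : ℕ → A :=
  fun n => S.getD n (y (n - S.length))

namespace Subst6

lemma shift_iterate (y : ℕ → A) (n t : ℕ) : shift^[n] y t = y (t + n) := by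
  induction n generalizing y with
  | zero => rfl
  | succ n ih =>
    rw [Function.iterate_succ_apply]
    rw [ih (shift y)]
    rfl

@[simp] lemma length_prefixWord (x : ℕ → A) (n : ℕ) : (prefixWord x n).length = n := by
  simp [prefixWord]

@[simp] lemma length_factorAt (x : ℕ → A) (i n : ℕ) : (factorAt x i n).length = n := by
  simp [factorAt]

lemma prefixWord_succ (x : ℕ → A) (n : ℕ) :
    prefixWord x (n + 1) = prefixWord x n ++ [x n] := by
  simp [prefixWord, List.range_succ]

lemma getElem_prefixWord (x : ℕ → A) {n t : ℕ} (h : t < (prefixWord x n).length) :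
    (prefixWord x n)[t] = x t := by
  simp [prefixWord]

lemma getElem_factorAt (x : ℕ → A) {i n t : ℕ} (h : t < (factorAt x i n).length) :
    (factorAt x i n)[t] = x (i + t) := by
  simp [factorAt]

lemma factorAt_eq_prefixWord_shift (x : ℕ → A) (m n : ℕ) :
    factorAt x m n = prefixWord (shift^[m] x) n := by
  apply List.ext_getElem (by simp)
  intro t h1 h2
  rw [getElem_factorAt, getElem_prefixWord, shift_iterate]
  congr 1; omega

lemma prefixWord_add (x : ℕ → A) (m n : ℕ) :
    prefixWord x (m + n) = prefixWord x m ++ factorAt x m n := by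
  rw [prefixWord, List.range_add, List.map_append, List.map_map]
  rfl

@[simp] lemma wordMap_nil (H : A → List A) : wordMap H [] = [] := rfl

lemma wordMap_cons (H : A → List A) (a : A) (w : List A) :
    wordMap H (a :: w) = H a ++ wordMap H w := by simp [wordMap]

@[simp] lemma wordMap_singleton (H : A → List A) (a : A) : wordMap H [a] = H a := by
  simp [wordMap]

lemma wordMap_append (H : A → List A) (w v : List A) :
    wordMap H (w ++ v) = wordMap H w ++ wordMap H v := List.flatMap_append

lemma length_le_wordMap (H : A → List A) (hne : ∀ a, H a ≠ []) (w : List A) :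
    w.length ≤ (wordMap H w).length := by
  induction w with
  | nil => simp
  | cons a w ih =>
    rw [wordMap_cons]
    have : 1 ≤ (H a).length := List.length_pos_iff.mpr (hne a)
    simp only [List.length_append, List.length_cons]
    omega

/-- the cut points of the `H`-decomposition of `substSeq H x`. -/
def cut (H : A → List A) (x : ℕ → A) (m : ℕ) : ℕ := (wordMap H (prefixWord x m)).length

@[simp] lemma cut_zero (H : A → List A) (x : ℕ → A) : cut H x 0 = 0 := by
  simp [cut, prefixWord]

lemma cut_succ (H : A → List A) (x : ℕ → A) (m : ℕ) :
    cut H x (m + 1) = cut H x m + (H (x m)).length := by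
  simp [cut, prefixWord_succ, wordMap_append]

lemma cut_strictMono (H : A → List A) (hne : ∀ a, H a ≠ []) (x : ℕ → A) :
    StrictMono (cut H x) := by
  apply strictMono_nat_of_lt_succ
  intro n
  rw [cut_succ]
  have : 1 ≤ (H (x n)).length := List.length_pos_iff.mpr (hne (x n))
  omega

lemma self_le_cut (H : A → List A) (hne : ∀ a, H a ≠ []) (x : ℕ → A) (m : ℕ) :
    m ≤ cut H x m := by
  have h := length_le_wordMap H hne (prefixWord x m)
  simpa [cut] using h

lemma cut_add (H : A → List A) (x : ℕ → A) (m n : ℕ) :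
    cut H x (m + n) = cut H x m + cut H (shift^[m] x) n := by
  simp [cut, prefixWord_add, wordMap_append, factorAt_eq_prefixWord_shift]

lemma getD_prefix {l1 l2 : List A} (h : l1 <+: l2) {n : ℕ} (hn : n < l1.length) (d : A) :
    l2.getD n d = l1.getD n d := by
  obtain ⟨t, rfl⟩ := h
  rw [List.getD_append _ _ _ _ hn]

lemma wordMap_prefixWord_prefix (H : A → List A) (x : ℕ → A) {m m' : ℕ} (h : m ≤ m') :
    wordMap H (prefixWord x m) <+: wordMap H (prefixWord x m') := by
  refine ⟨wordMap H (factorAt x m (m' - m)), ?_⟩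
  rw [← wordMap_append, ← prefixWord_add]
  have h2 : m + (m' - m) = m' := by omega
  rw [h2]

lemma substSeq_eq_getD {H : A → List A} (hne : ∀ a, H a ≠ []) (x : ℕ → A) {n m : ℕ}
    (h : n < cut H x m) : substSeq H x n = (wordMap H (prefixWord x m)).getD n (x 0) := by
  have hdef : substSeq H x n = (wordMap H (prefixWord x (n + 1))).getD n (x 0) := rfl
  rw [hdef]
  have h1 : n < cut H x (n + 1) := lt_of_lt_of_le (Nat.lt_succ_self n) (self_le_cut H hne x (n + 1))
  rcases le_total m (n + 1) with hm | hm
  · rw [getD_prefix (wordMap_prefixWord_prefix H x hm) h]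
  · rw [getD_prefix (wordMap_prefixWord_prefix H x hm) h1]

lemma substSeq_block {H : A → List A} (hne : ∀ a, H a ≠ []) (x : ℕ → A) {m t : ℕ}
    (h : t < (H (x m)).length) :
    substSeq H x (cut H x m + t) = (H (x m)).getD t (x 0) := by
  rw [substSeq_eq_getD hne x (m := m + 1) (by rw [cut_succ]; omega)]
  rw [prefixWord_succ, wordMap_append, wordMap_singleton,
    List.getD_append_right _ _ _ _ (by exact Nat.le_add_right _ _)]
  congr 1
  have : (wordMap H (prefixWord x m)).length = cut H x m := rfl
  omega

lemma substSeq_congr {H : A → List A} {x1 x2 : ℕ → A} {n : ℕ}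
    (h : ∀ i ≤ n, x1 i = x2 i) : substSeq H x1 n = substSeq H x2 n := by
  have hmap : (List.range (n + 1)).map x1 = (List.range (n + 1)).map x2 := by
    apply List.map_congr_left
    intro i hi
    exact h i (by have := List.mem_range.mp hi; omega)
  simp only [substSeq]
  rw [show wordMap H (List.map x1 (List.range (n+1))) = wordMap H (List.map x2 (List.range (n+1))) from by rw [hmap], h 0 (Nat.zero_le n)]

lemma substSeq_shift_cut {H : A → List A} (hne : ∀ a, H a ≠ []) (x : ℕ → A) (j t : ℕ) :
    substSeq H x (cut H x j + t) = substSeq H (shift^[j] x) t := by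
  have h1 : t < cut H (shift^[j] x) (t + 1) :=
    lt_of_lt_of_le (Nat.lt_succ_self t) (self_le_cut H hne _ _)
  have h2 : cut H x j + t < cut H x (j + (t + 1)) := by
    rw [cut_add]; omega
  rw [substSeq_eq_getD hne x h2, substSeq_eq_getD hne _ h1]
  rw [prefixWord_add, wordMap_append]
  have hc : (wordMap H (prefixWord x j)).length = cut H x j := rfl
  rw [List.getD_append_right _ _ _ _ (by omega)]
  rw [factorAt_eq_prefixWord_shift]
  have hlen : cut H x j + t - (wordMap H (prefixWord x j)).length = t := by omega
  rw [hlen]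
  rw [List.getD_eq_getElem _ _ h1, List.getD_eq_getElem _ _ h1]



lemma getD_prefixWord (x : ℕ → A) {n t : ℕ} (h : t < n) (d : A) :
    (prefixWord x n).getD t d = x t := by
  rw [List.getD_eq_getElem _ _ (by simpa using h), getElem_prefixWord]

lemma getD_factorAt (x : ℕ → A) {i n t : ℕ} (h : t < n) (d : A) :
    (factorAt x i n).getD t d = x (i + t) := by
  rw [List.getD_eq_getElem _ _ (by simpa using h), getElem_factorAt]

lemma prefixWord_eq_factorAt_iff {y u : ℕ → A} {L i : ℕ} :
    prefixWord y L = factorAt u i L ↔ ∀ t < L, y t = u (i + t) := by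
  constructor
  · intro h t ht
    have h2 : (prefixWord y L).getD t (y 0) = (factorAt u i L).getD t (y 0) := by rw [h]
    rwa [getD_prefixWord y ht, getD_factorAt u ht] at h2
  · intro h
    apply List.ext_getElem (by simp)
    intro t h1 h2
    rw [getElem_prefixWord, getElem_factorAt]
    exact h t (by simpa using h1)

lemma prefixWord_mem_lang_iff {u y : ℕ → A} {L : ℕ} :
    prefixWord y L ∈ Lang u ↔ ∃ i, ∀ t < L, y t = u (i + t) := by
  unfold Lang
  simp only [Set.mem_setOf_eq, length_prefixWord]
  exact exists_congr fun i => prefixWord_eq_factorAt_iff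

section Topo
variable [TopologicalSpace A] [DiscreteTopology A]

lemma mem_orbitClosure_iff (u y : ℕ → A) :
    y ∈ orbitClosure u ↔ ∀ L, ∃ i, ∀ t < L, y t = u (i + t) := by
  constructor
  · intro h L
    have hopen : IsOpen {v : ℕ → A | ∀ t < L, v t = y t} := by
      have he : {v : ℕ → A | ∀ t < L, v t = y t}
          = ⋂ t ∈ Finset.range L, (fun v : ℕ → A => v t) ⁻¹' {y t} := by
        ext v
        simp [Set.mem_iInter]
      rw [he]
      exact isOpen_biInter_finset fun t _ =>
        (continuous_apply t).isOpen_preimage _ (isOpen_discrete _)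
    obtain ⟨v, hv1, hv2⟩ := mem_closure_iff.mp h _ hopen (by intro t ht; rfl)
    obtain ⟨n, rfl⟩ := hv2
    refine ⟨n, fun t ht => ?_⟩
    rw [← hv1 t ht, shift_iterate]
    congr 1
    omega
  · intro h
    rw [orbitClosure, mem_closure_iff_nhds]
    intro U hU
    rw [nhds_pi] at hU
    obtain ⟨I, hIfin, V, hV, hVU⟩ := Filter.mem_pi.mp hU
    obtain ⟨L, hL⟩ : ∃ L : ℕ, ∀ i ∈ I, i < L := by
      rcases Set.Finite.bddAbove hIfin with ⟨b, hb⟩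
      exact ⟨b + 1, fun i hi => Nat.lt_succ_of_le (hb hi)⟩
    obtain ⟨n, hn⟩ := h L
    refine ⟨shift^[n] u, hVU ?_, ⟨n, rfl⟩⟩
    intro i hi
    have hv : shift^[n] u i = y i := by
      rw [shift_iterate, hn i (hL i hi)]
      congr 1
      omega
    rw [hv]
    exact mem_of_mem_nhds (hV i)

lemma mem_orbitClosure_iff_lang (u y : ℕ → A) :
    y ∈ orbitClosure u ↔ ∀ L, prefixWord y L ∈ Lang u := by
  rw [mem_orbitClosure_iff]
  exact forall_congr' fun L => prefixWord_mem_lang_iff.symm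

end Topo

lemma factorAt_mem_lang {u y : ℕ → A} {i n : ℕ} (h : ∀ t < n, y t = u (i + t)) {j l : ℕ}
    (hjl : j + l ≤ n) : factorAt y j l ∈ Lang u := by
  refine ⟨i + j, ?_⟩
  apply List.ext_getElem (by simp)
  intro t h1 h2
  rw [getElem_factorAt, getElem_factorAt]
  rw [h (j + t) (by simp at h1; omega)]
  congr 1
  omega

section Fix

variable {H : A → List A} {u : ℕ → A}

lemma wordMap_prefix_fix (hne : ∀ a, H a ≠ []) (hu : IsFixedPointSubst H u) (m : ℕ) :
    wordMap H (prefixWord u m) = prefixWord u (cut H u m) := by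
  apply List.ext_getElem (by simp [cut])
  intro t h1 h2
  rw [getElem_prefixWord]
  have h3 : substSeq H u t = (wordMap H (prefixWord u m)).getD t (u 0) :=
    substSeq_eq_getD hne u h1
  rw [List.getD_eq_getElem _ _ h1] at h3
  rw [← h3]
  show substSeq H u t = u t
  rw [hu]

lemma wordMap_ne (hne : ∀ a, H a ≠ []) {w : List A} (hw : w ≠ []) : wordMap H w ≠ [] := by
  rcases List.exists_cons_of_ne_nil hw with ⟨a, l, rfl⟩
  rw [wordMap_cons]
  simp [hne a]

lemma wordMap_iter_ne (hne : ∀ a, H a ≠ []) (s : ℕ) {w : List A} (hw : w ≠ []) :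
    (wordMap H)^[s] w ≠ [] := by
  induction s generalizing w with
  | zero => exact hw
  | succ s ih =>
    rw [Function.iterate_succ_apply]
    exact ih (wordMap_ne hne hw)

lemma wordMap_iter_append (s : ℕ) (w v : List A) :
    (wordMap H)^[s] (w ++ v) = (wordMap H)^[s] w ++ (wordMap H)^[s] v := by
  induction s generalizing w v with
  | zero => rfl
  | succ s ih =>
    rw [Function.iterate_succ_apply, Function.iterate_succ_apply,
      Function.iterate_succ_apply, wordMap_append, ih]

lemma iter_prefix_fix (hne : ∀ a, H a ≠ []) (hu : IsFixedPointSubst H u) (s m : ℕ) :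
    ∃ m', (wordMap H)^[s] (prefixWord u m) = prefixWord u m' := by
  induction s with
  | zero => exact ⟨m, rfl⟩
  | succ s ih =>
    obtain ⟨m', hm'⟩ := ih
    rw [Function.iterate_succ_apply', hm', wordMap_prefix_fix hne hu]
    exact ⟨_, rfl⟩

lemma le_length_wordMap_iter (hne : ∀ a, H a ≠ []) (s : ℕ) (w : List A) :
    w.length ≤ ((wordMap H)^[s] w).length := by
  induction s with
  | zero => simp
  | succ s ih =>
    rw [Function.iterate_succ_apply']
    exact le_trans ih (length_le_wordMap H hne _)

lemma prefixWord_one (x : ℕ → A) : prefixWord x 1 = [x 0] := by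
  simp [prefixWord, List.range_succ]

end Fix
section Prim

variable {H : A → List A} {u : ℕ → A}

lemma two_le_len_prim (hD : ∃ b c : A, b ≠ c) {k : ℕ}
    (hk : ∀ a b : A, b ∈ (wordMap H)^[k] [a]) (a : A) :
    2 ≤ ((wordMap H)^[k] [a]).length := by
  obtain ⟨b, c, hbc⟩ := hD
  have hb := hk a b
  have hc := hk a c
  by_contra hcon
  push_neg at hcon
  rcases hl : (wordMap H)^[k] [a] with _ | ⟨d, rest⟩
  · rw [hl] at hb
    simp at hb
  · rw [hl] at hb hc hcon
    have : rest = [] := by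
      rw [List.length_cons] at hcon
      exact List.length_eq_zero_iff.mp (by omega)
    subst this
    simp at hb hc
    exact hbc (hb.trans hc.symm)

lemma pow_le_len_prim (hne : ∀ a, H a ≠ []) (hD : ∃ b c : A, b ≠ c) {k : ℕ}
    (hk : ∀ a b : A, b ∈ (wordMap H)^[k] [a]) (t : ℕ) (a : A) :
    2 ^ t ≤ ((wordMap H)^[k * t] [a]).length := by
  induction t generalizing a with
  | zero => simp
  | succ t ih =>
    have hsplit : (wordMap H)^[k * (t + 1)] [a]
        = (wordMap H)^[k * t] ((wordMap H)^[k] [a]) := by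
      rw [show k * (t + 1) = k * t + k from by ring, Function.iterate_add_apply]
    obtain ⟨d, l1, hl1⟩ := List.exists_cons_of_ne_nil
      (wordMap_iter_ne hne k (by simp : ([a] : List A) ≠ []))
    have hlen2 := two_le_len_prim hD hk a
    rw [hl1] at hlen2
    obtain ⟨e, l2, hl2⟩ : ∃ e l2, l1 = e :: l2 := by
      rcases l1 with _ | ⟨e, l2⟩
      · simp at hlen2
      · exact ⟨e, l2, rfl⟩
    rw [hsplit, hl1, hl2]
    have hde : (d :: e :: l2 : List A) = [d] ++ ([e] ++ l2) := by simp
    rw [hde, wordMap_iter_append, wordMap_iter_append]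
    have h1 := ih d
    have h2 := ih e
    simp only [List.length_append]
    have : 2 ^ (t + 1) = 2 ^ t + 2 ^ t := by ring
    omega

/-- every factor of `u` occurs in some `H^m(u 0)`. -/
lemma factor_in_power (hne : ∀ a, H a ≠ []) (hu : IsFixedPointSubst H u)
    (hD : ∃ b c : A, b ≠ c) {k : ℕ} (hk0 : 0 < k)
    (hk : ∀ a b : A, b ∈ (wordMap H)^[k] [a]) {w : List A} (hw : w ∈ Lang u) :
    ∃ m p q, (wordMap H)^[m] [u 0] = p ++ w ++ q := by
  obtain ⟨i, hi⟩ := hw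
  set L := w.length with hL
  refine ⟨k * (i + L), prefixWord u i, ?_⟩
  have hbig : i + L ≤ ((wordMap H)^[k * (i + L)] [u 0]).length :=
    le_trans (le_of_lt (Nat.lt_two_pow_self)) (pow_le_len_prim hne hD hk (i + L) (u 0))
  obtain ⟨m', hm'⟩ := iter_prefix_fix hne hu (k * (i + L)) 1
  rw [prefixWord_one] at hm'
  have hm'len : m' = ((wordMap H)^[k * (i + L)] [u 0]).length := by
    have := congrArg List.length hm'
    simpa using this.symm
  refine ⟨factorAt u (i + L) (m' - (i + L)), ?_⟩
  rw [hm']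
  have h1 : m' = (i + L) + (m' - (i + L)) := by omega
  rw [h1, prefixWord_add, prefixWord_add, hi]
  simp [hL]

end Prim

section UnifRec

variable {H : A → List A} {u : ℕ → A}

/-- uniform recurrence of the fixed point of a primitive substitution. -/
lemma unif_rec (hne : ∀ a, H a ≠ []) (hu : IsFixedPointSubst H u)
    (hD : ∃ b c : A, b ≠ c) (hprim : PrimitiveSubst H) [Fintype A]
    {w : List A} (hw : w ∈ Lang u) :
    ∃ R, ∀ i, ∃ j, i ≤ j ∧ j + w.length ≤ i + R ∧ w = factorAt u j w.length := by
  classical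
  obtain ⟨k, hk0, hk⟩ := hprim
  -- w occurs in H^m(u 0)
  obtain ⟨m, p0, q0, hocc0⟩ := factor_in_power hne hu hD hk0 hk hw
  -- hence in H^(m+k)(a) for every a
  set M0 := m + k with hM0
  have hocc : ∀ a : A, ∃ p q, (wordMap H)^[M0] [a] = p ++ w ++ q := by
    intro a
    obtain ⟨p1, q1, hpq1⟩ := List.mem_iff_append.mp (hk a (u 0))
    refine ⟨(wordMap H)^[m] p1 ++ p0, q0 ++ (wordMap H)^[m] q1, ?_⟩
    rw [hM0, Function.iterate_add_apply, hpq1]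
    have : p1 ++ (u 0) :: q1 = p1 ++ ([u 0] ++ q1) := by simp
    rw [this, wordMap_iter_append, wordMap_iter_append, hocc0]
    simp
  -- max block length at level M0
  set Mx := Finset.univ.sup (fun a : A => ((wordMap H)^[M0] [a]).length) with hMx
  have hble : ∀ a : A, ((wordMap H)^[M0] [a]).length ≤ Mx := fun a => by
    rw [hMx]
    exact Finset.le_sup (f := fun a : A => ((wordMap H)^[M0] [a]).length) (Finset.mem_univ a)
  -- cut points at level M0
  set cM : ℕ → ℕ := fun j => ((wordMap H)^[M0] (prefixWord u j)).length with hcM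
  have hnil : (wordMap H)^[M0] (prefixWord u 0) = [] := by
    have h0 : prefixWord u 0 = ([] : List A) := by simp [prefixWord]
    rw [h0]
    induction M0 with
    | zero => rfl
    | succ s ih => rw [Function.iterate_succ_apply', ih]; rfl
  have hcM0 : cM 0 = 0 := by
    simp [hcM, hnil]
  have hcMsucc : ∀ j, cM (j + 1) = cM j + ((wordMap H)^[M0] [u j]).length := by
    intro j
    simp only [hcM]
    rw [prefixWord_succ, wordMap_iter_append]
    simp
  have hcMpre : ∀ j, (wordMap H)^[M0] (prefixWord u j) = prefixWord u (cM j) := by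
    intro j
    obtain ⟨m', hm'⟩ := iter_prefix_fix hne hu M0 j
    have hlen := congrArg List.length hm'
    simp only [length_prefixWord] at hlen
    rw [hm']
    congr 1
    simp only [hcM]
    exact hlen.symm
  have hblock : ∀ j, factorAt u (cM j) (((wordMap H)^[M0] [u j]).length)
      = (wordMap H)^[M0] [u j] := by
    intro j
    have h1 : prefixWord u (cM (j + 1)) = prefixWord u (cM j) ++ (wordMap H)^[M0] [u j] := by
      rw [← hcMpre, ← hcMpre, prefixWord_succ, wordMap_iter_append]
    have h2 : prefixWord u (cM (j + 1))
        = prefixWord u (cM j) ++ factorAt u (cM j) (((wordMap H)^[M0] [u j]).length) := by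
      rw [← prefixWord_add, hcMsucc]
    rw [h2] at h1
    exact List.append_cancel_left h1
  have hge : ∀ j, j ≤ cM j := by
    intro j
    calc j = (prefixWord u j).length := by simp
    _ ≤ _ := le_length_wordMap_iter hne M0 _
  refine ⟨2 * Mx, fun i => ?_⟩
  have hex : ∃ j, i ≤ cM j := ⟨i, hge i⟩
  set j := Nat.find hex with hj
  have hij : i ≤ cM j := Nat.find_spec hex
  have hcMle : cM j ≤ i + Mx := by
    rcases Nat.eq_zero_or_pos j with h0 | h0
    · rw [h0, hcM0]
      omega
    · obtain ⟨j', hj'⟩ : ∃ j', j = j' + 1 := ⟨j - 1, by omega⟩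
      have hlt : cM j' < i := by
        by_contra hcon
        push_neg at hcon
        exact Nat.find_min hex (by omega) hcon
      rw [hj', hcMsucc]
      have := hble (u j')
      omega
  obtain ⟨p, q, hpq⟩ := hocc (u j)
  refine ⟨cM j + p.length, by omega, ?_, ?_⟩
  · have hlen : p.length + w.length ≤ ((wordMap H)^[M0] [u j]).length := by
      rw [hpq]
      simp only [List.length_append]
      omega
    have := hble (u j)
    omega
  · -- w = factorAt u (cM j + p.length) w.length
    apply List.ext_getElem (by simp)
    intro t h1 h2
    have hb := hblock j
    rw [hpq] at hb
    have h3 : (p ++ w ++ q).getD (p.length + t) (u 0) = u (cM j + (p.length + t)) := by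
      rw [← hb, getD_factorAt u (by simp; omega)]
    have h4 : (p ++ w ++ q).getD (p.length + t) (u 0) = w.getD t (u 0) := by
      rw [List.getD_append _ _ _ _ (by simp; omega),
        List.getD_append_right _ _ _ _ (by omega)]
      congr 1
      omega
    rw [getElem_factorAt]
    rw [show (w[t]'h1 : A) = w.getD t (u 0) from (List.getD_eq_getElem _ _ h1).symm]
    rw [← h4, h3]
    congr 1
    omega

end UnifRec
section Desub
variable [TopologicalSpace A] [DiscreteTopology A] [Fintype A]

lemma cylinder_isOpen (z : ℕ → A) (T : ℕ) : IsOpen {v : ℕ → A | ∀ t ≤ T, v t = z t} := by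
  have he : {v : ℕ → A | ∀ t ≤ T, v t = z t}
      = ⋂ t ∈ Finset.range (T + 1), (fun v : ℕ → A => v t) ⁻¹' {z t} := by
    ext v
    simp [Nat.lt_succ_iff]
  rw [he]
  exact isOpen_biInter_finset fun t _ =>
    (continuous_apply t).isOpen_preimage _ (isOpen_discrete _)

lemma exists_desubstitution {H : A → List A} (hne : ∀ a, H a ≠ []) {u : ℕ → A}
    (hu : IsFixedPointSubst H u) {y : ℕ → A} (hy : y ∈ orbitClosure u) :
    ∃ z ∈ orbitClosure u, ∃ r < (H (z 0)).length, y = shift^[r] (substSeq H z) := by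
  classical
  have hchar := (mem_orbitClosure_iff u y).mp hy
  choose i hi using hchar
  set Mx := Finset.univ.sup (fun a : A => (H a).length) with hMx
  have hMa : ∀ a : A, (H a).length ≤ Mx := fun a => by
    rw [hMx]
    exact Finset.le_sup (f := fun a : A => (H a).length) (Finset.mem_univ a)
  set jf : ℕ → ℕ := fun L => Nat.findGreatest (fun j => cut H u j ≤ i L) (i L) with hjf
  have hj1 : ∀ L, cut H u (jf L) ≤ i L := by
    intro L
    exact Nat.findGreatest_spec (P := fun j => cut H u j ≤ i L) (Nat.zero_le (i L)) (by simp)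
  have hj2 : ∀ L, i L < cut H u (jf L + 1) := by
    intro L
    by_contra hcon
    push_neg at hcon
    have hle : jf L + 1 ≤ i L := le_trans (self_le_cut H hne u (jf L + 1)) hcon
    exact Nat.findGreatest_is_greatest (P := fun j => cut H u j ≤ i L)
      (Nat.lt_succ_self _) hle hcon
  set rf : ℕ → ℕ := fun L => i L - cut H u (jf L) with hrf
  have hrW : ∀ L, rf L < (H (u (jf L))).length := by
    intro L
    have h2 := hj2 L
    rw [cut_succ] at h2
    have h1 := hj1 L
    simp only [hrf]
    omega
  have hrMx : ∀ L, rf L < Mx := fun L => lt_of_lt_of_le (hrW L) (hMa _)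
  have hagree : ∀ L t, t < L → y t = substSeq H (shift^[jf L] u) (rf L + t) := by
    intro L t ht
    calc y t = u (i L + t) := hi L t ht
    _ = substSeq H u (cut H u (jf L) + (rf L + t)) := by
        rw [hu]
        congr 1
        have := hj1 L
        simp only [hrf]
        omega
    _ = substSeq H (shift^[jf L] u) (rf L + t) := substSeq_shift_cut hne u _ _
  -- pigeonhole on the offsets
  set ff : ℕ → Fin Mx := fun L => ⟨rf L, hrMx L⟩ with hff
  obtain ⟨rv, hrv⟩ := Finite.exists_infinite_fiber ff
  have hset : {L | ff L = rv}.Infinite := by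
    rw [← Set.infinite_coe_iff]
    have he : {L | ff L = rv} = ff ⁻¹' {rv} := by ext L; simp
    rw [he]
    exact hrv
  set nth := Nat.nth (fun L => ff L = rv) with hnth
  have hnthP : ∀ n, ff (nth n) = rv := fun n => Nat.nth_mem_of_infinite hset n
  have hnthM : StrictMono nth := Nat.nth_strictMono hset
  -- compactness: subsequence converging in K
  have hKc : IsCompact (orbitClosure u) := isClosed_closure.isCompact
  have hmem : ∀ n, shift^[jf (nth n)] u ∈ orbitClosure u := fun n =>
    subset_closure ⟨_, rfl⟩
  obtain ⟨z, hzK, φ, hφ, hconv⟩ := hKc.tendsto_subseq hmem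
  set ψ : ℕ → ℕ := fun n => nth (φ n) with hψ
  have hψmono : StrictMono ψ := hnthM.comp hφ
  have hψge : ∀ n, n ≤ ψ n := fun n => hψmono.le_apply
  have hr : ∀ n, rf (ψ n) = rv.1 := fun n => congrArg Fin.val (hnthP (φ n))
  have hagree2 : ∀ T : ℕ, ∀ᶠ n in atTop, ∀ t ≤ T, (shift^[jf (ψ n)] u) t = z t := by
    intro T
    have hzmem : z ∈ {v : ℕ → A | ∀ t ≤ T, v t = z t} := fun t _ => rfl
    exact hconv.eventually (Filter.eventually_of_mem
      ((cylinder_isOpen z T).mem_nhds hzmem) (fun v hv => hv))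
  have hz0 : rv.1 < (H (z 0)).length := by
    obtain ⟨n, hn⟩ := (hagree2 0).exists
    have h0 := hn 0 le_rfl
    rw [shift_iterate] at h0
    simp only [Nat.zero_add] at h0
    rw [← hr n, ← h0]
    exact hrW (ψ n)
  refine ⟨z, hzK, rv.1, hz0, ?_⟩
  funext t
  obtain ⟨n, hn1, hn2⟩ := ((hagree2 (rv.1 + t)).and (Filter.eventually_ge_atTop (t + 1))).exists
  have ht : t < ψ n := lt_of_lt_of_le (by omega) (hψge n)
  have h5 := hagree (ψ n) t ht
  rw [hr n] at h5
  rw [h5, shift_iterate]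
  have hcomm : t + rv.1 = rv.1 + t := by omega
  rw [hcomm]
  exact substSeq_congr (fun s hs => hn1 s hs)

end Desub
lemma getD_zero_eq_head {l : List A} (h : l ≠ []) (d : A) : l.getD 0 d = l.head h := by
  rw [List.getD_eq_getElem _ _ (List.length_pos_iff.mpr h), List.head_eq_getElem]

lemma getD_last_eq_getLast {l : List A} (h : l ≠ []) (d : A) :
    l.getD (l.length - 1) d = l.getLast h := by
  have hp : 0 < l.length := List.length_pos_iff.mpr h
  rw [List.getD_eq_getElem _ _ (by omega), List.getLast_eq_getElem]

section Core

variable {H : A → List A} {x z : ℕ → A} {r : ℕ}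

/-- value of `substSeq H z` at position `r + cut H x m + t`, via `H x = shift^r (H z)`. -/
lemma Wx (hne : ∀ a, H a ≠ []) (hxz : ∀ t, substSeq H x t = substSeq H z (r + t))
    {m t : ℕ} (ht : t < (H (x m)).length) :
    substSeq H z (r + cut H x m + t) = (H (x m)).getD t (x 0) := by
  rw [show r + cut H x m + t = r + (cut H x m + t) from by omega, ← hxz]
  exact substSeq_block hne x ht

lemma subst_inj (hne : ∀ a, H a ≠ [])
    (hhead : Function.Injective (fun a => (H a).head (hne a)))
    {x z : ℕ → A} (h : ∀ t, substSeq H x t = substSeq H z t) : x = z := by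
  have hletter : ∀ m, cut H x m = cut H z m → x m = z m := by
    intro m hc
    have e1 : substSeq H x (cut H x m) = (H (x m)).head (hne _) := by
      have := substSeq_block hne x (m := m) (t := 0) (List.length_pos_iff.mpr (hne (x m)))
      rw [Nat.add_zero] at this
      rw [this, getD_zero_eq_head]
    have e2 : substSeq H z (cut H z m) = (H (z m)).head (hne _) := by
      have := substSeq_block hne z (m := m) (t := 0) (List.length_pos_iff.mpr (hne (z m)))
      rw [Nat.add_zero] at this
      rw [this, getD_zero_eq_head]
    apply hhead
    show (H (x m)).head _ = (H (z m)).head _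
    rw [← e1, ← e2, h, hc]
  have hmain : ∀ m, cut H x m = cut H z m ∧ x m = z m := by
    intro m
    induction m with
    | zero => exact ⟨by simp, hletter 0 (by simp)⟩
    | succ m ih =>
      have hc : cut H x (m + 1) = cut H z (m + 1) := by
        rw [cut_succ, cut_succ, ih.1, ih.2]
      exact ⟨hc, hletter (m + 1) hc⟩
  funext m
  exact (hmain m).2

section Nonaligned

variable (hne : ∀ a, H a ≠ [])
  (hhead : Function.Injective (fun a => (H a).head (hne a)))
  (hlast : Function.Injective (fun a => (H a).getLast (hne a)))
  (hr0 : 0 < r) (hrlt : r < (H (z 0)).length)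
  (hxz : ∀ t, substSeq H x t = substSeq H z (r + t))

include hne hlast hr0 hrlt hxz in
lemma no_align : ∀ m k, r + cut H x m ≠ cut H z k := by
  intro m
  induction m with
  | zero =>
    intro k
    cases k with
    | zero => simp; omega
    | succ k' =>
      have h1 : cut H z 1 ≤ cut H z (k' + 1) := (cut_strictMono H hne z).monotone (by omega)
      have h2 : cut H z 1 = (H (z 0)).length := by
        rw [show (1 : ℕ) = 0 + 1 from rfl, cut_succ, cut_zero, Nat.zero_add]
      simp only [cut_zero, Nat.add_zero]
      omega
  | succ m ih =>
    intro k hkeq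
    have hxpos : 0 < cut H x (m + 1) :=
      lt_of_lt_of_le (Nat.succ_pos m) (self_le_cut H hne x (m + 1))
    obtain ⟨k', rfl⟩ : ∃ k', k = k' + 1 := by
      refine ⟨k - 1, ?_⟩
      rcases Nat.eq_zero_or_pos k with rfl | hk
      · rw [cut_zero] at hkeq
        omega
      · omega
    have lx : 1 ≤ (H (x m)).length := List.length_pos_iff.mpr (hne _)
    have lz : 1 ≤ (H (z k')).length := List.length_pos_iff.mpr (hne _)
    have ex : cut H x (m + 1) = cut H x m + (H (x m)).length := cut_succ H x m
    have ez : cut H z (k' + 1) = cut H z k' + (H (z k')).length := cut_succ H z k'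
    -- last letters agree
    have hlz : substSeq H z (cut H z k' + ((H (z k')).length - 1))
        = (H (z k')).getLast (hne _) := by
      rw [substSeq_block hne z (by omega), getD_last_eq_getLast]
    have hlx : substSeq H x (cut H x m + ((H (x m)).length - 1))
        = (H (x m)).getLast (hne _) := by
      rw [substSeq_block hne x (by omega), getD_last_eq_getLast]
    have hidx : r + (cut H x m + ((H (x m)).length - 1))
        = cut H z k' + ((H (z k')).length - 1) := by omega
    have hlast_eq : (H (x m)).getLast (hne _) = (H (z k')).getLast (hne _) := by
      rw [← hlx, ← hlz, hxz _, hidx]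
    have hxm : x m = z k' := hlast hlast_eq
    apply ih k'
    have : (H (x m)).length = (H (z k')).length := by rw [hxm]
    omega

/-- the index of the `z`-block containing the `m`-th `x`-cut. -/
noncomputable def Kf (H : A → List A) (x z : ℕ → A) (r : ℕ) (m : ℕ) : ℕ :=
  Nat.findGreatest (fun k => cut H z k < r + cut H x m) (r + cut H x m)

noncomputable def alphaf (H : A → List A) (x z : ℕ → A) (r : ℕ) (m : ℕ) : ℕ :=
  r + cut H x m - cut H z (Kf H x z r m)

include hne hr0 in
lemma Kf_lt (m : ℕ) : cut H z (Kf H x z r m) < r + cut H x m := by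
  apply Nat.findGreatest_spec (P := fun k => cut H z k < r + cut H x m) (Nat.zero_le _)
  simp
  omega

include hne hlast hr0 hrlt hxz in
lemma Kf_lt_succ (m : ℕ) :
    r + cut H x m < cut H z (Kf H x z r m + 1) := by
  have h1 := Kf_lt (H := H) (x := x) (z := z) (r := r) hne hr0 m
  have hb : Kf H x z r m + 1 ≤ r + cut H x m :=
    Nat.succ_le_of_lt (lt_of_le_of_lt (self_le_cut H hne z _) h1)
  have h2 : ¬ (cut H z (Kf H x z r m + 1) < r + cut H x m) := by
    intro hcon
    exact Nat.findGreatest_is_greatest (P := fun k => cut H z k < r + cut H x m)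
      (Nat.lt_succ_self _) hb hcon
  have h3 := no_align hne hlast hr0 hrlt hxz m (Kf H x z r m + 1)
  omega

include hne in
lemma Kf_eq {m k : ℕ} (h1 : cut H z k < r + cut H x m)
    (h2 : r + cut H x m < cut H z (k + 1)) : Kf H x z r m = k := by
  have hge : k ≤ Kf H x z r m :=
    Nat.le_findGreatest (le_trans (self_le_cut H hne z k) (le_of_lt h1)) h1
  have hle : Kf H x z r m ≤ k := by
    by_contra hcon
    push_neg at hcon
    have hmono : cut H z (k + 1) ≤ cut H z (Kf H x z r m) :=
      (cut_strictMono H hne z).monotone (Nat.succ_le_of_lt hcon)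
    have h4 : cut H z (Kf H x z r m) < r + cut H x m := by
      apply Nat.findGreatest_spec (P := fun k => cut H z k < r + cut H x m) (Nat.zero_le _)
      simp
      omega
    omega
  omega

include hne hr0 in
lemma alphaf_spec (m : ℕ) :
    r + cut H x m = cut H z (Kf H x z r m) + alphaf H x z r m ∧ 0 < alphaf H x z r m := by
  have h1 := Kf_lt (H := H) (x := x) (z := z) (r := r) hne hr0 m
  unfold alphaf
  omega

include hne hlast hr0 hrlt hxz in
lemma alphaf_lt (m : ℕ) : alphaf H x z r m < (H (z (Kf H x z r m))).length := by
  have h1 := Kf_lt (H := H) (x := x) (z := z) (r := r) hne hr0 m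
  have h2 := Kf_lt_succ hne hlast hr0 hrlt hxz m
  rw [cut_succ] at h2
  unfold alphaf
  omega

include hne hhead hlast hr0 hrlt hxz in
lemma inner_transfer {m1 m2 : ℕ} (hx12 : x m1 = x m2)
    (hz12 : z (Kf H x z r m1) = z (Kf H x z r m2))
    (ha12 : alphaf H x z r m1 = alphaf H x z r m2) :
    ∀ j, cut H z (Kf H x z r m1 + j) < r + cut H x (m1 + 1) →
      z (Kf H x z r m1 + j) = z (Kf H x z r m2 + j) ∧
      ∃ g, cut H z (Kf H x z r m1 + j) = cut H z (Kf H x z r m1) + g ∧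
           cut H z (Kf H x z r m2 + j) = cut H z (Kf H x z r m2) + g ∧
           cut H z (Kf H x z r m2 + j) < r + cut H x (m2 + 1) := by
  have hsp1 := alphaf_spec (x := x) (z := z) hne hr0 m1
  have hsp2 := alphaf_spec (x := x) (z := z) hne hr0 m2
  have hcs1 : cut H x (m1 + 1) = cut H x m1 + (H (x m1)).length := cut_succ H x m1
  have hcs2 : cut H x (m2 + 1) = cut H x m2 + (H (x m2)).length := cut_succ H x m2
  have hxlen : (H (x m1)).length = (H (x m2)).length := by rw [hx12]
  intro j
  induction j with
  | zero =>
    intro _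
    refine ⟨by simpa using hz12, 0, by simp, by simp, ?_⟩
    simp only [Nat.add_zero]
    have := Kf_lt (H := H) (x := x) (z := z) (r := r) hne hr0 m2
    have hlp : 0 < (H (x m2)).length := List.length_pos_iff.mpr (hne _)
    omega
  | succ j ih =>
    intro hlt
    have hmono : cut H z (Kf H x z r m1 + j) < cut H z (Kf H x z r m1 + (j + 1)) :=
      cut_strictMono H hne z (by omega)
    obtain ⟨hzj, g, e1, e2, hb2⟩ := ih (by omega)
    set c := z (Kf H x z r m1 + j) with hc
    have e1' : cut H z (Kf H x z r m1 + (j + 1))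
        = cut H z (Kf H x z r m1) + (g + (H c).length) := by
      rw [show Kf H x z r m1 + (j + 1) = (Kf H x z r m1 + j) + 1 from rfl, cut_succ, e1, ← hc]
      omega
    have e2' : cut H z (Kf H x z r m2 + (j + 1))
        = cut H z (Kf H x z r m2) + (g + (H c).length) := by
      rw [show Kf H x z r m2 + (j + 1) = (Kf H x z r m2 + j) + 1 from rfl, cut_succ, e2, ← hzj]
      omega
    -- the new cut is strictly inside the x-block of m1
    have hgt : r + cut H x m1 < cut H z (Kf H x z r m1 + (j + 1)) := by
      have h1 := Kf_lt_succ hne hlast hr0 hrlt hxz m1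
      have h2 : cut H z (Kf H x z r m1 + 1) ≤ cut H z (Kf H x z r m1 + (j + 1)) :=
        (cut_strictMono H hne z).monotone (by omega)
      omega
    set t := g + (H c).length - alphaf H x z r m1 with hT
    have hq1 : cut H z (Kf H x z r m1 + (j + 1)) = r + cut H x m1 + t := by omega
    have htlt : t < (H (x m1)).length := by omega
    have hq2 : cut H z (Kf H x z r m2 + (j + 1)) = r + cut H x m2 + t := by omega
    have hb2' : cut H z (Kf H x z r m2 + (j + 1)) < r + cut H x (m2 + 1) := by omega
    -- letters: compare heads through the x-block
    have hlp1 : 0 < (H (z (Kf H x z r m1 + (j + 1)))).length := List.length_pos_iff.mpr (hne _)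
    have hlp2 : 0 < (H (z (Kf H x z r m2 + (j + 1)))).length := List.length_pos_iff.mpr (hne _)
    have hW1 : substSeq H z (cut H z (Kf H x z r m1 + (j + 1)))
        = (H (z (Kf H x z r m1 + (j + 1)))).getD 0 (z 0) := by
      have := substSeq_block hne z (m := Kf H x z r m1 + (j + 1)) (t := 0) hlp1
      simpa using this
    have hW2 : substSeq H z (cut H z (Kf H x z r m2 + (j + 1)))
        = (H (z (Kf H x z r m2 + (j + 1)))).getD 0 (z 0) := by
      have := substSeq_block hne z (m := Kf H x z r m2 + (j + 1)) (t := 0) hlp2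
      simpa using this
    have hX1 : substSeq H z (r + cut H x m1 + t) = (H (x m1)).getD t (x 0) :=
      Wx hne hxz htlt
    have hX2 : substSeq H z (r + cut H x m2 + t) = (H (x m2)).getD t (x 0) :=
      Wx hne hxz (by omega)
    have hheads : (H (z (Kf H x z r m1 + (j + 1)))).getD 0 (z 0)
        = (H (z (Kf H x z r m2 + (j + 1)))).getD 0 (z 0) := by
      rw [← hW1, ← hW2, hq1, hq2, hX1, hX2, hx12]
    have hzz : z (Kf H x z r m1 + (j + 1)) = z (Kf H x z r m2 + (j + 1)) := by
      apply hhead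
      show (H _).head _ = (H _).head _
      rw [← getD_zero_eq_head (hne _) (z 0), ← getD_zero_eq_head (hne _) (z 0), hheads]
    exact ⟨hzz, g + (H c).length, e1', e2', hb2'⟩

include hne hhead hlast hr0 hrlt hxz in
lemma step_transfer {m1 m2 : ℕ} (hx12 : x m1 = x m2)
    (hz12 : z (Kf H x z r m1) = z (Kf H x z r m2))
    (ha12 : alphaf H x z r m1 = alphaf H x z r m2) :
    x (m1 + 1) = x (m2 + 1) ∧ z (Kf H x z r (m1 + 1)) = z (Kf H x z r (m2 + 1)) ∧
      alphaf H x z r (m1 + 1) = alphaf H x z r (m2 + 1) := by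
  classical
  set P1 := fun j => cut H z (Kf H x z r m1 + j) < r + cut H x (m1 + 1) with hP1
  set P2 := fun j => cut H z (Kf H x z r m2 + j) < r + cut H x (m2 + 1) with hP2
  have hpx1 : r + cut H x m1 < r + cut H x (m1 + 1) := by
    have := cut_strictMono H hne x (by omega : m1 < m1 + 1)
    omega
  have hpx2 : r + cut H x m2 < r + cut H x (m2 + 1) := by
    have := cut_strictMono H hne x (by omega : m2 < m2 + 1)
    omega
  have hP1_0 : P1 0 := by
    have := Kf_lt (H := H) (x := x) (z := z) (r := r) hne hr0 m1
    simp only [hP1, Nat.add_zero]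
    omega
  have hP2_0 : P2 0 := by
    have := Kf_lt (H := H) (x := x) (z := z) (r := r) hne hr0 m2
    simp only [hP2, Nat.add_zero]
    omega
  set j1 := Nat.findGreatest P1 (r + cut H x (m1 + 1)) with hj1
  set j2 := Nat.findGreatest P2 (r + cut H x (m2 + 1)) with hj2
  have hj1spec : P1 j1 := Nat.findGreatest_spec (Nat.zero_le _) hP1_0
  have hj2spec : P2 j2 := Nat.findGreatest_spec (Nat.zero_le _) hP2_0
  have hbound1 : ∀ j, P1 j → j ≤ r + cut H x (m1 + 1) := by
    intro j hj
    have : j ≤ cut H z (Kf H x z r m1 + j) :=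
      le_trans (by omega) (self_le_cut H hne z _)
    exact le_trans this (le_of_lt hj)
  have hbound2 : ∀ j, P2 j → j ≤ r + cut H x (m2 + 1) := by
    intro j hj
    have : j ≤ cut H z (Kf H x z r m2 + j) :=
      le_trans (by omega) (self_le_cut H hne z _)
    exact le_trans this (le_of_lt hj)
  have hj1max : ¬ P1 (j1 + 1) := by
    intro hcon
    exact Nat.findGreatest_is_greatest (Nat.lt_succ_self _) (hbound1 _ hcon) hcon
  have hj2max : ¬ P2 (j2 + 1) := by
    intro hcon
    exact Nat.findGreatest_is_greatest (Nat.lt_succ_self _) (hbound2 _ hcon) hcon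
  -- K (m+1) in terms of j*
  have hK1 : Kf H x z r (m1 + 1) = Kf H x z r m1 + j1 := by
    apply Kf_eq hne hj1spec
    have hne' := no_align hne hlast hr0 hrlt hxz (m1 + 1) (Kf H x z r m1 + j1 + 1)
    have h5 : ¬ cut H z (Kf H x z r m1 + (j1 + 1)) < r + cut H x (m1 + 1) := hj1max
    have h6 : cut H z (Kf H x z r m1 + (j1 + 1)) = cut H z (Kf H x z r m1 + j1 + 1) := rfl
    omega
  have hK2 : Kf H x z r (m2 + 1) = Kf H x z r m2 + j2 := by
    apply Kf_eq hne hj2spec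
    have hne' := no_align hne hlast hr0 hrlt hxz (m2 + 1) (Kf H x z r m2 + j2 + 1)
    have h5 : ¬ cut H z (Kf H x z r m2 + (j2 + 1)) < r + cut H x (m2 + 1) := hj2max
    have h6 : cut H z (Kf H x z r m2 + (j2 + 1)) = cut H z (Kf H x z r m2 + j2 + 1) := rfl
    omega
  -- j1 = j2
  have hj12 : j1 = j2 := by
    have hle1 : j1 ≤ j2 := by
      obtain ⟨_, g, _, _, hb⟩ := inner_transfer hne hhead hlast hr0 hrlt hxz hx12 hz12 ha12 j1 hj1spec
      exact Nat.le_findGreatest (hbound2 _ hb) hb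
    have hle2 : j2 ≤ j1 := by
      obtain ⟨_, g, _, _, hb⟩ := inner_transfer hne hhead hlast hr0 hrlt hxz hx12.symm hz12.symm
        ha12.symm j2 hj2spec
      exact Nat.le_findGreatest (hbound1 _ hb) hb
    omega
  obtain ⟨hzj, g, e1, e2, hb2⟩ := inner_transfer hne hhead hlast hr0 hrlt hxz hx12 hz12 ha12 j1 hj1spec
  have hzcomp : z (Kf H x z r (m1 + 1)) = z (Kf H x z r (m2 + 1)) := by
    rw [hK1, hK2, ← hj12]
    exact hzj
  -- alpha component
  have hsp1 := alphaf_spec (x := x) (z := z) hne hr0 m1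
  have hsp2 := alphaf_spec (x := x) (z := z) hne hr0 m2
  have hsp1' := alphaf_spec (x := x) (z := z) hne hr0 (m1 + 1)
  have hsp2' := alphaf_spec (x := x) (z := z) hne hr0 (m2 + 1)
  have hcs1 : cut H x (m1 + 1) = cut H x m1 + (H (x m1)).length := cut_succ H x m1
  have hcs2 : cut H x (m2 + 1) = cut H x m2 + (H (x m2)).length := cut_succ H x m2
  have hxlen : (H (x m1)).length = (H (x m2)).length := by rw [hx12]
  have hacomp : alphaf H x z r (m1 + 1) = alphaf H x z r (m2 + 1) := by
    have k1 : cut H z (Kf H x z r (m1 + 1)) = cut H z (Kf H x z r m1) + g := by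
      rw [hK1]; exact e1
    have k2 : cut H z (Kf H x z r (m2 + 1)) = cut H z (Kf H x z r m2) + g := by
      rw [hK2, ← hj12]; exact e2
    omega
  -- x component
  have ha1lt := alphaf_lt hne hlast hr0 hrlt hxz (x := x) (m1 + 1)
  have ha2lt := alphaf_lt hne hlast hr0 hrlt hxz (x := x) (m2 + 1)
  have hxx : x (m1 + 1) = x (m2 + 1) := by
    have hB1 : substSeq H z (cut H z (Kf H x z r (m1 + 1)) + alphaf H x z r (m1 + 1))
        = (H (z (Kf H x z r (m1 + 1)))).getD (alphaf H x z r (m1 + 1)) (z 0) :=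
      substSeq_block hne z ha1lt
    have hB2 : substSeq H z (cut H z (Kf H x z r (m2 + 1)) + alphaf H x z r (m2 + 1))
        = (H (z (Kf H x z r (m2 + 1)))).getD (alphaf H x z r (m2 + 1)) (z 0) :=
      substSeq_block hne z ha2lt
    have hA1 : substSeq H z (r + cut H x (m1 + 1)) = (H (x (m1 + 1))).getD 0 (x 0) := by
      have := Wx hne hxz (m := m1 + 1) (t := 0) (List.length_pos_iff.mpr (hne _))
      simpa using this
    have hA2 : substSeq H z (r + cut H x (m2 + 1)) = (H (x (m2 + 1))).getD 0 (x 0) := by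
      have := Wx hne hxz (m := m2 + 1) (t := 0) (List.length_pos_iff.mpr (hne _))
      simpa using this
    have hidx1 : r + cut H x (m1 + 1)
        = cut H z (Kf H x z r (m1 + 1)) + alphaf H x z r (m1 + 1) := hsp1'.1
    have hidx2 : r + cut H x (m2 + 1)
        = cut H z (Kf H x z r (m2 + 1)) + alphaf H x z r (m2 + 1) := hsp2'.1
    have hheads : (H (x (m1 + 1))).getD 0 (x 0) = (H (x (m2 + 1))).getD 0 (x 0) := by
      rw [← hA1, ← hA2, hidx1, hidx2, hB1, hB2, hzcomp, hacomp]
    apply hhead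
    show (H _).head _ = (H _).head _
    rw [← getD_zero_eq_head (hne _) (x 0), ← getD_zero_eq_head (hne _) (x 0), hheads]
  exact ⟨hxx, hzcomp, hacomp⟩

include hne hhead hlast hr0 hrlt hxz in
lemma core_eventually_periodic [Fintype A] :
    ∃ N p, 0 < p ∧ ∀ n, N ≤ n → substSeq H x (n + p) = substSeq H x n := by
  classical
  set Mx := Finset.univ.sup (fun a : A => (H a).length) with hMx
  have hMa : ∀ a : A, (H a).length ≤ Mx := fun a => by
    rw [hMx]
    exact Finset.le_sup (f := fun a : A => (H a).length) (Finset.mem_univ a)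
  have hαM : ∀ m, alphaf H x z r m < Mx := fun m =>
    lt_of_lt_of_le (alphaf_lt hne hlast hr0 hrlt hxz (x := x) m) (hMa _)
  set Q : ℕ → A × A × Fin Mx :=
    fun m => (x m, z (Kf H x z r m), ⟨alphaf H x z r m, hαM m⟩) with hQdef
  obtain ⟨a, b, hab, hQ⟩ := Finite.exists_ne_map_eq_of_infinite Q
  obtain ⟨m1, m2, hm12, hQeq⟩ : ∃ m1 m2, m1 < m2 ∧ Q m1 = Q m2 := by
    rcases lt_or_gt_of_ne hab with h | h
    · exact ⟨a, b, h, hQ⟩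
    · exact ⟨b, a, h, hQ.symm⟩
  have hx0 : x m1 = x m2 := congrArg (fun q => q.1) hQeq
  have hz0 : z (Kf H x z r m1) = z (Kf H x z r m2) := congrArg (fun q => q.2.1) hQeq
  have ha0 : alphaf H x z r m1 = alphaf H x z r m2 :=
    congrArg (fun q => (q.2.2 : Fin Mx).1) hQeq
  -- iterate the transfer
  have hstep : ∀ j, x (m1 + j) = x (m2 + j) ∧
      z (Kf H x z r (m1 + j)) = z (Kf H x z r (m2 + j)) ∧
      alphaf H x z r (m1 + j) = alphaf H x z r (m2 + j) := by
    intro j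
    induction j with
    | zero => exact ⟨hx0, hz0, ha0⟩
    | succ j ih =>
      obtain ⟨h1, h2, h3⟩ := ih
      exact step_transfer hne hhead hlast hr0 hrlt hxz h1 h2 h3
  set π := cut H x m2 - cut H x m1 with hπ
  have hπpos : 0 < π := by
    have := cut_strictMono H hne x hm12
    omega
  have hcutper : ∀ j, cut H x (m2 + j) = cut H x (m1 + j) + π := by
    intro j
    induction j with
    | zero =>
      have := (cut_strictMono H hne x).monotone (le_of_lt hm12)
      simp only [Nat.add_zero]
      omega
    | succ j ih =>
      have e1 : cut H x (m1 + (j + 1)) = cut H x (m1 + j) + (H (x (m1 + j))).length :=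
        cut_succ H x (m1 + j)
      have e2 : cut H x (m2 + (j + 1)) = cut H x (m2 + j) + (H (x (m2 + j))).length :=
        cut_succ H x (m2 + j)
      have e3 : (H (x (m1 + j))).length = (H (x (m2 + j))).length := by
        rw [(hstep j).1]
      omega
  refine ⟨cut H x m1, π, hπpos, ?_⟩
  intro n hn
  have hm1n : m1 ≤ n := le_trans (self_le_cut H hne x m1) hn
  set P := fun m => cut H x m ≤ n with hP
  set mm := Nat.findGreatest P n with hmm
  have hspec : P mm := Nat.findGreatest_spec hm1n hn
  have hm1mm : m1 ≤ mm := Nat.le_findGreatest hm1n hn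
  have hmax : n < cut H x (mm + 1) := by
    by_contra hcon
    push_neg at hcon
    have hb : mm + 1 ≤ n := le_trans (self_le_cut H hne x (mm + 1)) hcon
    exact Nat.findGreatest_is_greatest (Nat.lt_succ_self _) hb hcon
  have hcs : cut H x (mm + 1) = cut H x mm + (H (x mm)).length := cut_succ H x mm
  set t := n - cut H x mm with ht
  have htlt : t < (H (x mm)).length := by
    simp only [hP] at hspec
    omega
  have e1 : substSeq H x n = (H (x mm)).getD t (x 0) := by
    rw [show n = cut H x mm + t from by simp only [hP] at hspec; omega]
    exact substSeq_block hne x htlt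
  have hxe : x (mm + (m2 - m1)) = x mm := by
    have h := (hstep (mm - m1)).1
    rw [show m1 + (mm - m1) = mm from by omega] at h
    rw [show mm + (m2 - m1) = m2 + (mm - m1) from by omega]
    exact h.symm
  have e2 : cut H x (mm + (m2 - m1)) = cut H x mm + π := by
    have h := hcutper (mm - m1)
    rw [show m1 + (mm - m1) = mm from by omega] at h
    rw [show mm + (m2 - m1) = m2 + (mm - m1) from by omega]
    exact h
  have e3 : substSeq H x (n + π) = (H (x (mm + (m2 - m1)))).getD t (x 0) := by
    rw [show n + π = cut H x (mm + (m2 - m1)) + t from by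
      simp only [hP] at hspec
      omega]
    exact substSeq_block hne x (by rw [hxe]; exact htlt)
  rw [e1, e3, hxe]

end Nonaligned
end Core

section Final
variable [TopologicalSpace A] [DiscreteTopology A] [Fintype A]

lemma periodic_of_eventually_periodic {H : A → List A} (hne : ∀ a, H a ≠ [])
    {u : ℕ → A} (hu : IsFixedPointSubst H u) (hD : ∃ b c : A, b ≠ c)
    (hprim : PrimitiveSubst H) {y : ℕ → A} (hyK : y ∈ orbitClosure u)
    {N p : ℕ} (hp : 0 < p) (hper : ∀ n, N ≤ n → y (n + p) = y n) : PeriodicSeq u := by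
  refine ⟨p, hp, fun t0 => ?_⟩
  set L := t0 + p + 1 with hL
  have hw : prefixWord u L ∈ Lang u := by
    rw [prefixWord_mem_lang_iff]
    exact ⟨0, fun t _ => by rw [Nat.zero_add]⟩
  obtain ⟨R, hR⟩ := unif_rec hne hu hD hprim hw
  obtain ⟨i, hiy⟩ := (mem_orbitClosure_iff u y).mp hyK (N + R)
  obtain ⟨j, hj1, hj2, hj3⟩ := hR (i + N)
  have hj3' : ∀ t < L, u t = u (j + t) :=
    prefixWord_eq_factorAt_iff.mp (by simpa using hj3)
  have hj2' : j + L ≤ i + N + R := by simpa using hj2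
  set s := j - (i + N) with hs
  have hjs : j = i + N + s := by omega
  have key : ∀ t < L, u t = y (N + s + t) := by
    intro t htL
    have h2 := hiy (N + s + t) (by omega)
    have h1 : u (j + t) = y (N + s + t) := by
      rw [h2]
      congr 1
      omega
    rw [hj3' t htL, h1]
  have k1 : u (t0 + p) = y (N + s + t0 + p) := by
    rw [key (t0 + p) (by omega)]
    congr 1
    omega
  have k2 : u t0 = y (N + s + t0) := key t0 (by omega)
  rw [k1, k2]
  exact hper (N + s + t0) (by omega)

lemma mem_attractor_of_subst_mem {H : A → List A} (hne : ∀ a, H a ≠ [])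
    (hprim : PrimitiveSubst H) (haper : AperiodicSubst H) (hmarked : MarkedSubst H hne)
    (hD : ∃ b c : A, b ≠ c) {u : ℕ → A} (hu : IsFixedPointSubst H u)
    {x : ℕ → A} (hyK : substSeq H x ∈ orbitClosure u) : x ∈ orbitClosure u := by
  obtain ⟨z, hzK, r, hrlt, heq⟩ := exists_desubstitution hne hu hyK
  obtain ⟨hhead, hlast⟩ := hmarked
  rcases Nat.eq_zero_or_pos r with hr0 | hr0
  · subst hr0
    simp only [Function.iterate_zero, id] at heq
    have hxz : x = z := subst_inj hne hhead (fun t => by rw [heq])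
    rwa [hxz]
  · exfalso
    have hxz : ∀ t, substSeq H x t = substSeq H z (r + t) := by
      intro t
      rw [heq, shift_iterate]
      congr 1
      omega
    obtain ⟨N, p, hp, hper⟩ := core_eventually_periodic hne hhead hlast hr0 hrlt hxz
    exact haper u hu (periodic_of_eventually_periodic hne hu hD hprim hyK hp hper)

end Final
end Subst6


/-- For a marked, primitive, aperiodic substitution, the complement
of the attractor `K` is invariant under `H`: if `x ∉ K` then `H^s(x) ∉ K` for all `s`. -/
theorem iterate_not_mem_attractor
    {A : Type*} [Fintype A] [DecidableEq A] [TopologicalSpace A] [DiscreteTopology A]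
    (hD : 2 ≤ Fintype.card A)
    (H : A → List A) (hne : ∀ a, H a ≠ [])
    (hprim : PrimitiveSubst H) (haper : AperiodicSubst H)
    (hmarked : MarkedSubst H hne)
    (u : ℕ → A) (hu : IsFixedPointSubst H u)
    (x : ℕ → A) (hx : x ∉ orbitClosure u) (s : ℕ) :
    (substSeq H)^[s] x ∉ orbitClosure u := by
  have hD' : ∃ b c : A, b ≠ c := Fintype.exists_pair_of_one_lt_card (by omega)
  induction s with
  | zero => simpa using hx
  | succ s ih =>
    rw [Function.iterate_succ_apply']
    intro hcon
    exact ih (Subst6.mem_attractor_of_subst_mem hne hprim haper hmarked hD' hu hcon)
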